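/- Let I = (𝔼, D, c, f) be a CMP instance whose objective f is of type sum, product, or bottleneck, and let E = {e_1,…,e_k} ⊆ 𝔼. Then max_{l=1,…,k} l'(I,e_l) ≤ l'(I,E) ≤ Σ_{l=1}^k l'(I,e_l). -/
import Mathlib


open scoped ENNReal BigOperators

/-- Objective type of a combinatorial minimization problem:
sum, product, or bottleneck. -/
inductive ObjType where
  | sum : ObjType
  | prod : ObjType
  | bottleneck : ObjType
deriving DecidableEq

/-- The cost `f_c(S)` of a feasible solution `S` under cost function `c`:
the sum, the product, or the maximum (for nonempty `S`) of the element costs. -/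
noncomputable def objCost {ι : Type*} (t : ObjType) (c : ι → ℝ) (S : Finset ι) : ℝ :=
  match t with
  | ObjType.sum => ∑ e ∈ S, c e
  | ObjType.prod => ∏ e ∈ S, c e
  | ObjType.bottleneck => if h : S.Nonempty then S.sup' h c else 0

/-- The optimal objective value `f(I)` of the instance with feasible set `D`. -/
noncomputable def optVal {ι : Type*} (t : ObjType) (c : ι → ℝ) (D : Finset (Finset ι)) : ℝ :=
  if h : D.Nonempty then D.inf' h (objCost t c) else 0

/-- `S` is an optimal solution of the instance `(𝔼, D, c, f)`. -/
def isOpt {ι : Type*} (t : ObjType) (c : ι → ℝ) (D : Finset (Finset ι)) (S : Finset ι) : Prop :=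
  S ∈ D ∧ objCost t c S = optVal t c D

/-- `0 ≤ a < maxdec(e)`, where `maxdec(e) = ∞` for sum/bottleneck objectives and
`maxdec(e) = c(e)` for the product objective. -/
def decOK {ι : Type*} (t : ObjType) (c : ι → ℝ) (e : ι) (a : ℝ) : Prop :=
  0 ≤ a ∧ (t = ObjType.prod → a < c e)

/-- Extended single upper tolerance
`u'(I,e) = sup {α ≥ 0 : every optimal solution of I is optimal for I_{α,e}}` valued in `[0,∞]`. -/
noncomputable def uTol {ι : Type*} [DecidableEq ι] (t : ObjType) (c : ι → ℝ)
    (D : Finset (Finset ι)) (e : ι) : ℝ≥0∞ :=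
  sSup (ENNReal.ofReal '' {a : ℝ | 0 ≤ a ∧
    ∀ S : Finset ι, isOpt t c D S →
      isOpt t (fun x => if x = e then c x + a else c x) D S})

/-- Extended regular set upper tolerance `u'(I,E)`, valued in `[0,∞]`. -/
noncomputable def uTolSet {ι : Type*} [DecidableEq ι] (t : ObjType) (c : ι → ℝ)
    (D : Finset (Finset ι)) (E : Finset ι) : ℝ≥0∞ :=
  sSup (ENNReal.ofReal '' {a : ℝ |
    ∀ S : Finset ι, isOpt t c D S →
      ∃ α : ι → ℝ, (∀ x, 0 ≤ α x) ∧ (∀ x ∉ E, α x = 0) ∧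
        a = ∑ x ∈ E, α x ∧ isOpt t (fun x => c x + α x) D S})

/-- Extended reverse set upper tolerance `u_b'(I,E)`, valued in `[0,∞]` (`inf ∅ = ∞`). -/
noncomputable def uTolSetRev {ι : Type*} [DecidableEq ι] (t : ObjType) (c : ι → ℝ)
    (D : Finset (Finset ι)) (E : Finset ι) : ℝ≥0∞ :=
  sInf (ENNReal.ofReal '' {a : ℝ |
    ∃ S : Finset ι, isOpt t c D S ∧
      ∃ α : ι → ℝ, (∀ x, 0 ≤ α x) ∧ (∀ x ∉ E, α x = 0) ∧
        a = ∑ x ∈ E, α x ∧ ¬ isOpt t (fun x => c x + α x) D S})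

/-- New single lower tolerance
`l'(I,e) = sup {α : 0 ≤ α < maxdec(e), f(I_{−α,e}) = f(I)}`, valued in `[0,∞]`. -/
noncomputable def lTol {ι : Type*} [DecidableEq ι] (t : ObjType) (c : ι → ℝ)
    (D : Finset (Finset ι)) (e : ι) : ℝ≥0∞ :=
  sSup (ENNReal.ofReal '' {a : ℝ | decOK t c e a ∧
    optVal t (fun x => if x = e then c x - a else c x) D = optVal t c D})

/-- New regular set lower tolerance `l'(I,E)`, valued in `[0,∞]`. -/
noncomputable def lTolSet {ι : Type*} [DecidableEq ι] (t : ObjType) (c : ι → ℝ)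
    (D : Finset (Finset ι)) (E : Finset ι) : ℝ≥0∞ :=
  sSup (ENNReal.ofReal '' {a : ℝ |
    ∃ α : ι → ℝ, (∀ x ∈ E, decOK t c x (α x)) ∧ (∀ x ∉ E, α x = 0) ∧
      a = ∑ x ∈ E, α x ∧ optVal t (fun x => c x - α x) D = optVal t c D})

/-- New reverse set lower tolerance `l_b'(I,E)`, valued in `[0,∞]` (`inf ∅ = ∞`). -/
noncomputable def lTolSetRev {ι : Type*} [DecidableEq ι] (t : ObjType) (c : ι → ℝ)
    (D : Finset (Finset ι)) (E : Finset ι) : ℝ≥0∞ :=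
  sInf (ENNReal.ofReal '' {a : ℝ |
    ∃ α : ι → ℝ, (∀ x ∈ E, decOK t c x (α x)) ∧ (∀ x ∉ E, α x = 0) ∧
      a = ∑ x ∈ E, α x ∧ optVal t (fun x => c x - α x) D < optVal t c D})


namespace LrgAux

lemma objCost_mono {ι : Type*} (t : ObjType) (c₁ c₂ : ι → ℝ)
    (h : ∀ x, c₁ x ≤ c₂ x) (hp : t = ObjType.prod → ∀ x, 0 ≤ c₁ x)
    (S : Finset ι) : objCost t c₁ S ≤ objCost t c₂ S := by
  cases t with
  | sum => exact Finset.sum_le_sum fun i _ => h i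
  | prod =>
      exact Finset.prod_le_prod (fun i _ => hp rfl i) (fun i _ => h i)
  | bottleneck =>
      unfold objCost
      by_cases hS : S.Nonempty
      · simp only [dif_pos hS]
        exact Finset.sup'_le hS _ fun i hi => le_trans (h i) (Finset.le_sup' c₂ hi)
      · simp [hS]

lemma optVal_mono {ι : Type*} (t : ObjType) (c₁ c₂ : ι → ℝ)
    (h : ∀ x, c₁ x ≤ c₂ x) (hp : t = ObjType.prod → ∀ x, 0 ≤ c₁ x)
    (D : Finset (Finset ι)) : optVal t c₁ D ≤ optVal t c₂ D := by
  unfold optVal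
  by_cases hD : D.Nonempty
  · simp only [dif_pos hD]
    obtain ⟨S, hS, hSeq⟩ := Finset.exists_mem_eq_inf' hD (objCost t c₂)
    rw [hSeq]
    exact le_trans (Finset.inf'_le _ hS) (objCost_mono t c₁ c₂ h hp S)
  · simp [hD]

end LrgAux

open LrgAux in
/-- Theorem 6(a): `max_{l} l'(I,e_l) ≤ l'(I,E) ≤ Σ_{l} l'(I,e_l)`. -/
theorem lrg_bounds {ι : Type*} [Fintype ι] [DecidableEq ι]
    (t : ObjType) (c : ι → ℝ) (D : Finset (Finset ι))
    (hD : D.Nonempty) (hSne : ∀ S ∈ D, S.Nonempty)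
    (hpos : t = ObjType.prod → ∀ x, 0 < c x)
    (E : Finset ι) (hE : E.Nonempty) :
    (E.sup fun e => lTol t c D e) ≤ lTolSet t c D E ∧
      lTolSet t c D E ≤ ∑ e ∈ E, lTol t c D e := by
  constructor
  · -- max ≤ set tolerance
    apply Finset.sup_le
    intro e he
    apply sSup_le_sSup
    apply Set.image_mono
    intro a ha
    obtain ⟨⟨ha0, halt⟩, hopt⟩ := ha
    refine ⟨fun x => if x = e then a else 0, ?_, ?_, ?_, ?_⟩
    · intro x hx
      by_cases hxe : x = e
      · subst hxe; simpa [decOK] using And.intro ha0 halt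
      · simp [decOK, hxe]
        intro ht; exact hpos ht x
    · intro x hx
      have : x ≠ e := fun h => hx (h ▸ he)
      simp [this]
    · rw [Finset.sum_ite_eq' E e (fun _ => a), if_pos he]
    · convert hopt using 2
      funext x
      by_cases hxe : x = e <;> simp [hxe]
  · -- set tolerance ≤ sum
    apply sSup_le
    rintro b ⟨a, ⟨α, hdec, h0, rfl, hopt⟩, rfl⟩
    have hα0 : ∀ x, 0 ≤ α x := by
      intro x
      by_cases hx : x ∈ E
      · exact (hdec x hx).1
      · simp [h0 x hx]
    have hle1 : ∀ x, c x - α x ≤ c x := fun x => by linarith [hα0 x]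
    have hp1 : t = ObjType.prod → ∀ x, 0 ≤ c x - α x := by
      intro ht x
      by_cases hx : x ∈ E
      · linarith [(hdec x hx).2 ht]
      · simp [h0 x hx]; exact (hpos ht x).le
    rw [ENNReal.ofReal_sum_of_nonneg (fun x hx => hα0 x)]
    apply Finset.sum_le_sum
    intro e he
    apply le_sSup
    refine ⟨α e, ⟨hdec e he, ?_⟩, rfl⟩
    have hle2 : ∀ x, c x - α x ≤ (if x = e then c x - α e else c x) := by
      intro x
      by_cases hxe : x = e
      · subst hxe; simp
      · simp [hxe]; exact hα0 x
    have hle3 : ∀ x, (if x = e then c x - α e else c x) ≤ c x := by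
      intro x
      by_cases hxe : x = e
      · subst hxe; simp; linarith [hα0 x]
      · simp [hxe]
    have hm1 := optVal_mono t (fun x => c x - α x) (fun x => if x = e then c x - α e else c x) hle2 hp1 D
    have hm2 := optVal_mono t (fun x => if x = e then c x - α e else c x) c hle3
      (by intro ht x; exact le_trans (hp1 ht x) (hle2 x)) D
    linarith [hm1, hm2, hopt]
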